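/- Let D be a k-derivation of T with D(E₁₁) = D(E₂₂) = D(E₃₃) = 0, determined by polynomials a, b, c ∈ k[β] via D(E₁₂) = a·E₁₂, D(β·E₂₂) = b·E₂₂, D(E₂₃) = c·E₂₃. Then D maps the ideal I(n; n′, n″; V) into itself (equivalently, D descends to a k-derivation of A = T / I(n; n′, n″; V)) if and only if δ·b(0) = 0 in k and (a + c)·v + b·v′ ∈ V for every v ∈ V. -/

import Mathlib

open Polynomial Matrix

noncomputable section

/-- `Algebra` structure on the quotient of a `k`-algebra by a ring congruence. -/
instance RingConQuotient.algebra (k R : Type*) [CommSemiring k] [Ring R] [Algebra k R]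
    (c : RingCon R) : Algebra k c.Quotient where
  algebraMap := (RingCon.mk' c).comp (algebraMap k R)
  commutes' := by
    intro r x
    induction x using Quotient.ind
    exact congrArg _ (Algebra.commutes r _)
  smul_def' := by
    intro r x
    induction x using Quotient.ind
    exact congrArg _ (Algebra.smul_def r _)

variable (k : Type*) [Field k]

/-- `D` is a `k`-derivation (as a linear endomorphism of a `k`-algebra). -/
def IsDer {R : Type*} [Ring R] [Algebra k R] (D : R →ₗ[k] R) : Prop :=
  ∀ x y : R, D (x * y) = D x * y + x * D y

/-- `D` is an inner derivation. -/
def IsInner {R : Type*} [Ring R] [Algebra k R] (D : R →ₗ[k] R) : Prop :=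
  ∃ a : R, ∀ x : R, D x = a * x - x * a

/-- The ideal `(β^j)` of `k[β]`, as a `k`-submodule. -/
def Bsub (j : ℕ) : Submodule k (Polynomial k) where
  carrier := {p | X ^ j ∣ p}
  zero_mem' := dvd_zero _
  add_mem' := fun h1 h2 => dvd_add h1 h2
  smul_mem' := fun c p hp => by
    simpa [Polynomial.smul_eq_C_mul] using Dvd.dvd.mul_left hp (C c)

lemma mem_Bsub {k : Type*} [Field k] {j : ℕ} {p : Polynomial k} :
    p ∈ Bsub k j ↔ X ^ j ∣ p := Iff.rfl

/-- The algebra `T`: upper triangular 3×3 matrices over `k[β]` whose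
`(1,1)` and `(3,3)` entries are constants. -/
def Tsub : Subalgebra k (Matrix (Fin 3) (Fin 3) (Polynomial k)) where
  carrier := {M | (∀ i j : Fin 3, j < i → M i j = 0) ∧
      (∃ x : k, M 0 0 = C x) ∧ (∃ z : k, M 2 2 = C z)}
  zero_mem' := ⟨fun _ _ _ => rfl, ⟨0, by simp⟩, ⟨0, by simp⟩⟩
  one_mem' := ⟨fun i j h => Matrix.one_apply_ne h.ne', ⟨1, by simp⟩, ⟨1, by simp⟩⟩
  add_mem' := by
    rintro a b ⟨hal, ⟨x, hax⟩, ⟨z, haz⟩⟩ ⟨hbl, ⟨y, hby⟩, ⟨w, hbw⟩⟩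
    refine ⟨fun i j h => by simp [hal i j h, hbl i j h], ⟨x + y, by simp [hax, hby]⟩,
      ⟨z + w, by simp [haz, hbw]⟩⟩
  mul_mem' := by
    rintro a b ⟨hal, ⟨x, hax⟩, ⟨z, haz⟩⟩ ⟨hbl, ⟨y, hby⟩, ⟨w, hbw⟩⟩
    refine ⟨fun i j h => ?_, ⟨x * y, ?_⟩, ⟨z * w, ?_⟩⟩
    · rw [Matrix.mul_apply]
      apply Finset.sum_eq_zero
      intro l _
      rcases lt_or_ge l i with hl | hl
      · rw [hal i l hl, zero_mul]
      · rw [hbl l j (lt_of_lt_of_le h hl), mul_zero]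
    · rw [Matrix.mul_apply, Fin.sum_univ_three,
        hbl 1 0 (by decide), hbl 2 0 (by decide), hax, hby]
      simp
    · rw [Matrix.mul_apply, Fin.sum_univ_three,
        hal 2 0 (by decide), hal 2 1 (by decide), haz, hbw]
      simp
  algebraMap_mem' := by
    intro r
    refine ⟨fun i j h => ?_, ⟨r, ?_⟩, ⟨r, ?_⟩⟩
    · rw [Matrix.algebraMap_matrix_apply, if_neg h.ne']
    · rw [Matrix.algebraMap_matrix_apply, if_pos rfl]; rfl
    · rw [Matrix.algebraMap_matrix_apply, if_pos rfl]; rfl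

/-- The matrix `p·E₁₂` as an element of `T`. -/
def tE12 (p : Polynomial k) : Tsub k :=
  ⟨Matrix.single 0 1 p, by
    refine ⟨fun i j h => ?_, ⟨0, ?_⟩, ⟨0, ?_⟩⟩
    · fin_cases i <;> fin_cases j <;> simp_all [Matrix.single, Matrix.of_apply]
    · simp [Matrix.single, Matrix.of_apply]
    · simp [Matrix.single, Matrix.of_apply]⟩

/-- The matrix `p·E₂₂` as an element of `T`. -/
def tE22 (p : Polynomial k) : Tsub k :=
  ⟨Matrix.single 1 1 p, by
    refine ⟨fun i j h => ?_, ⟨0, ?_⟩, ⟨0, ?_⟩⟩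
    · fin_cases i <;> fin_cases j <;> simp_all [Matrix.single, Matrix.of_apply]
    · simp [Matrix.single, Matrix.of_apply]
    · simp [Matrix.single, Matrix.of_apply]⟩

/-- The matrix `p·E₂₃` as an element of `T`. -/
def tE23 (p : Polynomial k) : Tsub k :=
  ⟨Matrix.single 1 2 p, by
    refine ⟨fun i j h => ?_, ⟨0, ?_⟩, ⟨0, ?_⟩⟩
    · fin_cases i <;> fin_cases j <;> simp_all [Matrix.single, Matrix.of_apply]
    · simp [Matrix.single, Matrix.of_apply]
    · simp [Matrix.single, Matrix.of_apply]⟩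

/-- The matrix `p·E₁₃` as an element of `T`. -/
def tE13 (p : Polynomial k) : Tsub k :=
  ⟨Matrix.single 0 2 p, by
    refine ⟨fun i j h => ?_, ⟨0, ?_⟩, ⟨0, ?_⟩⟩
    · fin_cases i <;> fin_cases j <;> simp_all [Matrix.single, Matrix.of_apply]
    · simp [Matrix.single, Matrix.of_apply]
    · simp [Matrix.single, Matrix.of_apply]⟩

/-- The idempotent `E₁₁` as an element of `T`. -/
def tE11 : Tsub k :=
  ⟨Matrix.single 0 0 1, by
    refine ⟨fun i j h => ?_, ⟨1, ?_⟩, ⟨0, ?_⟩⟩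
    · fin_cases i <;> fin_cases j <;> simp_all [Matrix.single, Matrix.of_apply]
    · simp [Matrix.single, Matrix.of_apply]
    · simp [Matrix.single, Matrix.of_apply]⟩

/-- The idempotent `E₂₂` as an element of `T`. -/
def tE22one : Tsub k := tE22 k 1

/-- The idempotent `E₃₃` as an element of `T`. -/
def tE33 : Tsub k :=
  ⟨Matrix.single 2 2 1, by
    refine ⟨fun i j h => ?_, ⟨0, ?_⟩, ⟨1, ?_⟩⟩
    · fin_cases i <;> fin_cases j <;> simp_all [Matrix.single, Matrix.of_apply]
    · simp [Matrix.single, Matrix.of_apply]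
    · simp [Matrix.single, Matrix.of_apply]⟩

/-- The underlying set of the ideal `I(n; n', n''; V)` of `T`. -/
def Icar (n n' n'' : ℕ) (V : Submodule k (Polynomial k)) : Set (Tsub k) :=
  {M | (M : Matrix (Fin 3) (Fin 3) (Polynomial k)) 0 0 = 0 ∧
       (M : Matrix (Fin 3) (Fin 3) (Polynomial k)) 2 2 = 0 ∧
       X ^ n' ∣ (M : Matrix (Fin 3) (Fin 3) (Polynomial k)) 0 1 ∧
       (M : Matrix (Fin 3) (Fin 3) (Polynomial k)) 0 2 ∈ V ∧
       X ^ n ∣ (M : Matrix (Fin 3) (Fin 3) (Polynomial k)) 1 1 ∧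
       X ^ n'' ∣ (M : Matrix (Fin 3) (Fin 3) (Polynomial k)) 1 2}

variable {k}

lemma Tsub_lower {a : Tsub k} :
    ∀ i j : Fin 3, j < i → (a : Matrix (Fin 3) (Fin 3) (Polynomial k)) i j = 0 := a.2.1

lemma Tsub_00 (a : Tsub k) : ∃ x : k, (a : Matrix (Fin 3) (Fin 3) (Polynomial k)) 0 0 = C x :=
  a.2.2.1

lemma Tsub_22 (a : Tsub k) : ∃ z : k, (a : Matrix (Fin 3) (Fin 3) (Polynomial k)) 2 2 = C z :=
  a.2.2.2

variable (k)

/-- The two-sided ideal `I(n; n', n''; V)` of `T`. -/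
def Itsi (n n' n'' : ℕ) (V : Submodule k (Polynomial k)) (hn' : n' ≤ n) (hn'' : n'' ≤ n)
    (hV : ∀ p : Polynomial k, X ^ min n' n'' ∣ p → p ∈ V) : TwoSidedIdeal (Tsub k) :=
  TwoSidedIdeal.mk' (Icar k n n' n'' V)
    (by
      refine ⟨rfl, rfl, ?_, ?_, ?_, ?_⟩ <;> simp)
    (by
      rintro a b ⟨h1, h2, h3, h4, h5, h6⟩ ⟨g1, g2, g3, g4, g5, g6⟩
      refine ⟨?_, ?_, ?_, ?_, ?_, ?_⟩ <;>
        simp only [AddMemClass.coe_add, Matrix.add_apply]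
      · rw [h1, g1, add_zero]
      · rw [h2, g2, add_zero]
      · exact dvd_add h3 g3
      · exact V.add_mem h4 g4
      · exact dvd_add h5 g5
      · exact dvd_add h6 g6)
    (by
      rintro a ⟨h1, h2, h3, h4, h5, h6⟩
      refine ⟨?_, ?_, ?_, ?_, ?_, ?_⟩ <;>
        simp only [NegMemClass.coe_neg, Matrix.neg_apply]
      · rw [h1, neg_zero]
      · rw [h2, neg_zero]
      · exact dvd_neg.mpr h3
      · exact V.neg_mem h4
      · exact dvd_neg.mpr h5
      · exact dvd_neg.mpr h6)
    (by
      rintro t a ⟨h1, h2, h3, h4, h5, h6⟩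
      have hta : ((t * a : Tsub k) : Matrix (Fin 3) (Fin 3) (Polynomial k)) =
          (t : Matrix (Fin 3) (Fin 3) (Polynomial k)) * a := rfl
      obtain ⟨x, hx⟩ := Tsub_00 t
      refine ⟨?_, ?_, ?_, ?_, ?_, ?_⟩ <;>
        rw [hta, Matrix.mul_apply, Fin.sum_univ_three]
      · rw [h1, Tsub_lower (a := a) 1 0 (by decide), Tsub_lower (a := a) 2 0 (by decide)]
        simp
      · rw [h2, Tsub_lower (a := t) 2 0 (by decide), Tsub_lower (a := t) 2 1 (by decide)]
        simp
      · rw [Tsub_lower (a := a) 2 1 (by decide)]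
        simp only [mul_zero, add_zero]
        exact dvd_add (Dvd.dvd.mul_left h3 _)
          (Dvd.dvd.mul_left ((pow_dvd_pow X hn').trans h5) _)
      · rw [h2]
        simp only [mul_zero, add_zero]
        refine V.add_mem ?_
          (hV _ (Dvd.dvd.mul_left ((pow_dvd_pow X (min_le_right n' n'')).trans h6) _))
        rw [hx]
        have : C x * (a : Matrix (Fin 3) (Fin 3) (Polynomial k)) 0 2 =
            x • (a : Matrix (Fin 3) (Fin 3) (Polynomial k)) 0 2 := by
          rw [Polynomial.smul_eq_C_mul]
        rw [this]
        exact V.smul_mem _ h4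
      · rw [Tsub_lower (a := t) 1 0 (by decide), Tsub_lower (a := a) 2 1 (by decide)]
        simp only [zero_mul, mul_zero, zero_add, add_zero]
        exact Dvd.dvd.mul_left h5 _
      · rw [Tsub_lower (a := t) 1 0 (by decide), h2]
        simp only [zero_mul, mul_zero, zero_add, add_zero]
        exact Dvd.dvd.mul_left h6 _)
    (by
      rintro a t ⟨h1, h2, h3, h4, h5, h6⟩
      have hta : ((a * t : Tsub k) : Matrix (Fin 3) (Fin 3) (Polynomial k)) =
          (a : Matrix (Fin 3) (Fin 3) (Polynomial k)) * t := rfl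
      obtain ⟨z, hz⟩ := Tsub_22 t
      refine ⟨?_, ?_, ?_, ?_, ?_, ?_⟩ <;>
        rw [hta, Matrix.mul_apply, Fin.sum_univ_three]
      · rw [h1, Tsub_lower (a := t) 1 0 (by decide), Tsub_lower (a := t) 2 0 (by decide)]
        simp
      · rw [h2, Tsub_lower (a := a) 2 0 (by decide), Tsub_lower (a := a) 2 1 (by decide)]
        simp
      · rw [h1, Tsub_lower (a := t) 2 1 (by decide)]
        simp only [zero_mul, mul_zero, zero_add, add_zero]
        exact Dvd.dvd.mul_right h3 _
      · rw [h1]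
        simp only [zero_mul, zero_add]
        refine V.add_mem
          (hV _ (Dvd.dvd.mul_right ((pow_dvd_pow X (min_le_left n' n'')).trans h3) _)) ?_
        rw [hz]
        have : (a : Matrix (Fin 3) (Fin 3) (Polynomial k)) 0 2 * C z =
            z • (a : Matrix (Fin 3) (Fin 3) (Polynomial k)) 0 2 := by
          rw [Polynomial.smul_eq_C_mul, mul_comm]
        rw [this]
        exact V.smul_mem _ h4
      · rw [Tsub_lower (a := a) 1 0 (by decide), Tsub_lower (a := t) 2 1 (by decide)]
        simp only [zero_mul, mul_zero, zero_add, add_zero]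
        exact Dvd.dvd.mul_right h5 _
      · rw [Tsub_lower (a := a) 1 0 (by decide)]
        simp only [zero_mul, zero_add]
        exact dvd_add (Dvd.dvd.mul_right ((pow_dvd_pow X hn'').trans h5) _)
          (Dvd.dvd.mul_right h6 _))

/-- The quotient algebra `A = T / I(n; n', n''; V)`. -/
def Aquot (n n' n'' : ℕ) (V : Submodule k (Polynomial k)) (hn' : n' ≤ n) (hn'' : n'' ≤ n)
    (hV : ∀ p : Polynomial k, X ^ min n' n'' ∣ p → p ∈ V) : Type _ :=
  (Itsi k n n' n'' V hn' hn'' hV).ringCon.Quotient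

instance (n n' n'' : ℕ) (V : Submodule k (Polynomial k)) (hn' : n' ≤ n) (hn'' : n'' ≤ n)
    (hV : ∀ p : Polynomial k, X ^ min n' n'' ∣ p → p ∈ V) :
    Ring (Aquot k n n' n'' V hn' hn'' hV) :=
  inferInstanceAs (Ring (Itsi k n n' n'' V hn' hn'' hV).ringCon.Quotient)

instance (n n' n'' : ℕ) (V : Submodule k (Polynomial k)) (hn' : n' ≤ n) (hn'' : n'' ≤ n)
    (hV : ∀ p : Polynomial k, X ^ min n' n'' ∣ p → p ∈ V) :
    Algebra k (Aquot k n n' n'' V hn' hn'' hV) :=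
  inferInstanceAs (Algebra k (Itsi k n n' n'' V hn' hn'' hV).ringCon.Quotient)

/-- The quotient map `T → A`. -/
def Amk (n n' n'' : ℕ) (V : Submodule k (Polynomial k)) (hn' : n' ≤ n) (hn'' : n'' ≤ n)
    (hV : ∀ p : Polynomial k, X ^ min n' n'' ∣ p → p ∈ V) :
    Tsub k →+* Aquot k n n' n'' V hn' hn'' hV :=
  RingCon.mk' (Itsi k n n' n'' V hn' hn'' hV).ringCon




section Helpers

variable {k}

lemma tE12_mul_tE22' (p q : Polynomial k) : tE12 k p * tE22 k q = tE12 k (p * q) :=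
  Subtype.ext (Matrix.single_mul_single_same (c := p) 0 1 1 q)

lemma tE22_mul' (p q : Polynomial k) : tE22 k p * tE22 k q = tE22 k (p * q) :=
  Subtype.ext (Matrix.single_mul_single_same (c := p) 1 1 1 q)

lemma tE22_mul_tE23' (p q : Polynomial k) : tE22 k p * tE23 k q = tE23 k (p * q) :=
  Subtype.ext (Matrix.single_mul_single_same (c := p) 1 1 2 q)

lemma tE12_mul_tE23' (p q : Polynomial k) : tE12 k p * tE23 k q = tE13 k (p * q) :=
  Subtype.ext (Matrix.single_mul_single_same (c := p) 0 1 2 q)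

lemma tE12_add' (p q : Polynomial k) : tE12 k (p + q) = tE12 k p + tE12 k q :=
  Subtype.ext (Matrix.single_add 0 1 p q)

lemma tE22_add' (p q : Polynomial k) : tE22 k (p + q) = tE22 k p + tE22 k q :=
  Subtype.ext (Matrix.single_add 1 1 p q)

lemma tE23_add' (p q : Polynomial k) : tE23 k (p + q) = tE23 k p + tE23 k q :=
  Subtype.ext (Matrix.single_add 1 2 p q)

lemma tE13_add' (p q : Polynomial k) : tE13 k (p + q) = tE13 k p + tE13 k q :=
  Subtype.ext (Matrix.single_add 0 2 p q)

lemma tE22_smul' (x : k) (p : Polynomial k) : tE22 k (x • p) = x • tE22 k p :=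
  Subtype.ext (Matrix.smul_single x 1 1 p).symm

lemma gcd_mul_eq_zero (t : k) (m l : ℕ) (hm : (m : k) * t = 0) (hl : (l : k) * t = 0) :
    ((Nat.gcd m l : ℕ) : k) * t = 0 := by
  have h : ((Nat.gcd m l : ℕ) : ℤ) = (m : ℤ) * Int.gcdA m l + (l : ℤ) * Int.gcdB m l := by
    rw [← Int.gcd_natCast_natCast]
    exact Int.gcd_eq_gcd_ab _ _
  have h2 := congrArg (fun z : ℤ => (z : k)) h
  push_cast at h2
  rw [h2]
  linear_combination ((Int.gcdA m l : ℤ) : k) * hm + ((Int.gcdB m l : ℤ) : k) * hl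

lemma dvd_extract (b : Polynomial k) (m : ℕ) (hm : 1 ≤ m)
    (h : X ^ m ∣ b * (C (m : k) * X ^ (m - 1))) : (m : k) * b.eval 0 = 0 := by
  obtain ⟨j, rfl⟩ : ∃ j, m = j + 1 := ⟨m - 1, (Nat.succ_pred_eq_of_pos hm).symm⟩
  obtain ⟨u, hu⟩ := h
  simp only [Nat.add_sub_cancel] at hu
  have key : X ^ j * (b * C ((j + 1 : ℕ) : k)) = X ^ j * (X * u) := by
    rw [pow_succ] at hu
    linear_combination hu
  have key2 : b * C ((j + 1 : ℕ) : k) = X * u :=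
    mul_left_cancel₀ (pow_ne_zero _ Polynomial.X_ne_zero) key
  have := congrArg (Polynomial.eval (0 : k)) key2
  simpa [mul_comm] using this

lemma dvd_deriv (b : Polynomial k) (m : ℕ) (hm : 1 ≤ m) (hb0 : (m : k) * b.eval 0 = 0)
    (p : Polynomial k) (hp : X ^ m ∣ p) : X ^ m ∣ b * derivative p := by
  obtain ⟨j, rfl⟩ : ∃ j, m = j + 1 := ⟨m - 1, (Nat.succ_pred_eq_of_pos hm).symm⟩
  obtain ⟨u, rfl⟩ := hp
  have h1 : X ∣ b * C ((j + 1 : ℕ) : k) := by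
    rw [Polynomial.X_dvd_iff, Polynomial.mul_coeff_zero, Polynomial.coeff_C_zero,
      Polynomial.coeff_zero_eq_eval_zero, mul_comm]
    exact hb0
  obtain ⟨w, hw⟩ := h1
  rw [derivative_mul, Polynomial.derivative_X_pow, mul_add, Nat.add_sub_cancel]
  refine dvd_add ⟨w * u, ?_⟩ ⟨b * derivative u, by ring⟩
  rw [pow_succ]
  linear_combination (X ^ j * u : Polynomial k) * hw

lemma tE22_zero : tE22 k (0 : Polynomial k) = 0 :=
  Subtype.ext (Matrix.single_zero 1 1)

lemma sum_coe (p q r s : Polynomial k) :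
    ((tE12 k p + tE22 k q + tE13 k r + tE23 k s : Tsub k) :
        Matrix (Fin 3) (Fin 3) (Polynomial k)) =
      single 0 1 p + single 1 1 q + single 0 2 r
        + single 1 2 s := rfl

lemma decomp (x : Tsub k) (h00 : (x : Matrix (Fin 3) (Fin 3) (Polynomial k)) 0 0 = 0)
    (h22 : (x : Matrix (Fin 3) (Fin 3) (Polynomial k)) 2 2 = 0) :
    x = tE12 k ((x : Matrix (Fin 3) (Fin 3) (Polynomial k)) 0 1)
      + tE22 k ((x : Matrix (Fin 3) (Fin 3) (Polynomial k)) 1 1)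
      + tE13 k ((x : Matrix (Fin 3) (Fin 3) (Polynomial k)) 0 2)
      + tE23 k ((x : Matrix (Fin 3) (Fin 3) (Polynomial k)) 1 2) := by
  have l10 := Tsub_lower (a := x) 1 0 (by decide)
  have l20 := Tsub_lower (a := x) 2 0 (by decide)
  have l21 := Tsub_lower (a := x) 2 1 (by decide)
  apply Subtype.ext
  rw [sum_coe]
  ext i j
  fin_cases i <;> fin_cases j <;>
    simp [tE12, tE22, tE13, tE23, Matrix.single, Matrix.add_apply, h00, h22,
      l10, l20, l21]

lemma D22 (D : Tsub k →ₗ[k] Tsub k) (hD : IsDer k D) (b : Polynomial k)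
    (hD2 : D (tE22one k) = 0) (hb : D (tE22 k X) = tE22 k b) (p : Polynomial k) :
    D (tE22 k p) = tE22 k (b * derivative p) := by
  induction p using Polynomial.induction_on with
  | C x =>
      have hx : tE22 k (C x) = x • tE22one k := by
        rw [tE22one, ← tE22_smul']
        congr 1
        rw [Polynomial.smul_eq_C_mul, mul_one]
      rw [hx, _root_.map_smul, hD2, smul_zero, derivative_C, mul_zero, tE22_zero]
  | add p q hp hq =>
      rw [tE22_add', map_add, hp, hq, ← tE22_add', derivative_add, mul_add]
  | monomial m x ih =>
      have h1 : (C x * X ^ (m + 1) : Polynomial k) = (C x * X ^ m) * X := by ring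
      rw [h1, ← tE22_mul', hD, ih, hb, tE22_mul', tE22_mul', ← tE22_add']
      congr 1
      simp only [derivative_mul, derivative_X]
      ring

lemma D12 (D : Tsub k →ₗ[k] Tsub k) (hD : IsDer k D) (a b : Polynomial k)
    (hD2 : D (tE22one k) = 0) (ha : D (tE12 k 1) = tE12 k a) (hb : D (tE22 k X) = tE22 k b)
    (p : Polynomial k) :
    D (tE12 k p) = tE12 k (a * p + b * derivative p) := by
  have h1 : tE12 k p = tE12 k 1 * tE22 k p := by rw [tE12_mul_tE22', one_mul]
  rw [h1, hD, ha, D22 D hD b hD2 hb, tE12_mul_tE22', tE12_mul_tE22', ← tE12_add']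
  congr 1
  ring

lemma D23 (D : Tsub k →ₗ[k] Tsub k) (hD : IsDer k D) (b c : Polynomial k)
    (hD2 : D (tE22one k) = 0) (hb : D (tE22 k X) = tE22 k b) (hc : D (tE23 k 1) = tE23 k c)
    (p : Polynomial k) :
    D (tE23 k p) = tE23 k (c * p + b * derivative p) := by
  have h1 : tE23 k p = tE22 k p * tE23 k 1 := by rw [tE22_mul_tE23', mul_one]
  rw [h1, hD, hc, D22 D hD b hD2 hb, tE22_mul_tE23', tE22_mul_tE23', ← tE23_add']
  congr 1
  ring

lemma D13 (D : Tsub k →ₗ[k] Tsub k) (hD : IsDer k D) (a b c : Polynomial k)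
    (hD2 : D (tE22one k) = 0) (ha : D (tE12 k 1) = tE12 k a) (hb : D (tE22 k X) = tE22 k b)
    (hc : D (tE23 k 1) = tE23 k c) (p : Polynomial k) :
    D (tE13 k p) = tE13 k ((a + c) * p + b * derivative p) := by
  have h1 : tE13 k p = tE12 k p * tE23 k 1 := by rw [tE12_mul_tE23', mul_one]
  rw [h1, hD, hc, D12 D hD a b hD2 ha hb, tE12_mul_tE23', tE12_mul_tE23', ← tE13_add']
  congr 1
  ring

lemma mem12 (n n' n'' : ℕ) (V : Submodule k (Polynomial k)) (w : Polynomial k)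
    (hw : X ^ n' ∣ w) : tE12 k w ∈ Icar k n n' n'' V := by
  refine ⟨?_, ?_, ?_, ?_, ?_, ?_⟩ <;>
    simp [tE12, Matrix.single, hw, V.zero_mem]

lemma mem22 (n n' n'' : ℕ) (V : Submodule k (Polynomial k)) (w : Polynomial k)
    (hw : X ^ n ∣ w) : tE22 k w ∈ Icar k n n' n'' V := by
  refine ⟨?_, ?_, ?_, ?_, ?_, ?_⟩ <;>
    simp [tE22, Matrix.single, hw, V.zero_mem]

lemma mem23 (n n' n'' : ℕ) (V : Submodule k (Polynomial k)) (w : Polynomial k)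
    (hw : X ^ n'' ∣ w) : tE23 k w ∈ Icar k n n' n'' V := by
  refine ⟨?_, ?_, ?_, ?_, ?_, ?_⟩ <;>
    simp [tE23, Matrix.single, hw, V.zero_mem]

lemma mem13 (n n' n'' : ℕ) (V : Submodule k (Polynomial k)) (w : Polynomial k)
    (hw : w ∈ V) : tE13 k w ∈ Icar k n n' n'' V := by
  refine ⟨?_, ?_, ?_, ?_, ?_, ?_⟩ <;>
    simp [tE13, Matrix.single, hw, V.zero_mem]

lemma get12 (n n' n'' : ℕ) (V : Submodule k (Polynomial k)) (w : Polynomial k)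
    (hw : tE12 k w ∈ Icar k n n' n'' V) : X ^ n' ∣ w := by
  simpa [tE12, Matrix.single] using hw.2.2.1

lemma get22 (n n' n'' : ℕ) (V : Submodule k (Polynomial k)) (w : Polynomial k)
    (hw : tE22 k w ∈ Icar k n n' n'' V) : X ^ n ∣ w := by
  simpa [tE22, Matrix.single] using hw.2.2.2.2.1

lemma get23 (n n' n'' : ℕ) (V : Submodule k (Polynomial k)) (w : Polynomial k)
    (hw : tE23 k w ∈ Icar k n n' n'' V) : X ^ n'' ∣ w := by
  simpa [tE23, Matrix.single] using hw.2.2.2.2.2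

lemma get13 (n n' n'' : ℕ) (V : Submodule k (Polynomial k)) (w : Polynomial k)
    (hw : tE13 k w ∈ Icar k n n' n'' V) : w ∈ V := by
  simpa [tE13, Matrix.single] using hw.2.2.2.1

end Helpers

/-- a normalized derivation of `T` with data `(a,b,c)` preserves the ideal
`I(n; n', n''; V)` iff `δ·b(0) = 0` and the operator `(a+c) + b·∂/∂β` preserves `V`. -/
theorem stmt5 (n n' n'' : ℕ) (h2 : 2 ≤ n) (h1' : 1 ≤ n') (h1'' : 1 ≤ n'')
    (hn' : n' ≤ n) (hn'' : n'' ≤ n) (V : Submodule k (Polynomial k))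
    (hV : ∀ p : Polynomial k, X ^ min n' n'' ∣ p → p ∈ V)
    (D : Tsub k →ₗ[k] Tsub k) (hD : IsDer k D)
    (hD1 : D (tE11 k) = 0) (hD2 : D (tE22one k) = 0) (hD3 : D (tE33 k) = 0)
    (a b c : Polynomial k)
    (ha : D (tE12 k 1) = tE12 k a) (hb : D (tE22 k X) = tE22 k b)
    (hc : D (tE23 k 1) = tE23 k c) :
    (∀ x ∈ Icar k n n' n'' V, D x ∈ Icar k n n' n'' V) ↔
      ((Nat.gcd n (Nat.gcd n' n'') : k) * b.eval 0 = 0 ∧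
        ∀ v ∈ V, (a + c) * v + b * derivative v ∈ V) := by
  constructor
  · intro H
    have hn1 : 1 ≤ n := by omega
    have hn : (n : k) * b.eval 0 = 0 := by
      have h := H _ (mem22 n n' n'' V (X ^ n) dvd_rfl)
      rw [D22 D hD b hD2 hb] at h
      have h5 := get22 n n' n'' V _ h
      rw [Polynomial.derivative_X_pow] at h5
      exact dvd_extract b n hn1 h5
    have hn' : (n' : k) * b.eval 0 = 0 := by
      have h := H _ (mem12 n n' n'' V (X ^ n') dvd_rfl)
      rw [D12 D hD a b hD2 ha hb] at h
      have h3 := get12 n n' n'' V _ h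
      have h3' : X ^ n' ∣ b * derivative (X ^ n') :=
        (dvd_add_right (dvd_mul_left _ _)).mp h3
      rw [Polynomial.derivative_X_pow] at h3'
      exact dvd_extract b n' h1' h3'
    have hn'' : (n'' : k) * b.eval 0 = 0 := by
      have h := H _ (mem23 n n' n'' V (X ^ n'') dvd_rfl)
      rw [D23 D hD b c hD2 hb hc] at h
      have h6 := get23 n n' n'' V _ h
      have h6' : X ^ n'' ∣ b * derivative (X ^ n'') :=
        (dvd_add_right (dvd_mul_left _ _)).mp h6
      rw [Polynomial.derivative_X_pow] at h6'
      exact dvd_extract b n'' h1'' h6'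
    refine ⟨gcd_mul_eq_zero _ n _ hn (gcd_mul_eq_zero _ n' n'' hn' hn''), ?_⟩
    intro v hv
    have h := H _ (mem13 n n' n'' V v hv)
    rw [D13 D hD a b c hD2 ha hb hc] at h
    exact get13 n n' n'' V _ h
  · rintro ⟨hδ, hVc⟩ x hx
    obtain ⟨h00, h22, h3, h4, h5, h6⟩ := hx
    have hb0 : ∀ m : ℕ, Nat.gcd n (Nat.gcd n' n'') ∣ m → (m : k) * b.eval 0 = 0 := by
      rintro m ⟨t, rfl⟩
      push_cast
      linear_combination (t : k) * hδ
    have hbn : (n : k) * b.eval 0 = 0 := hb0 n (Nat.gcd_dvd_left _ _)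
    have hbn' : (n' : k) * b.eval 0 = 0 :=
      hb0 n' ((Nat.gcd_dvd_right n _).trans (Nat.gcd_dvd_left n' n''))
    have hbn'' : (n'' : k) * b.eval 0 = 0 :=
      hb0 n'' ((Nat.gcd_dvd_right n _).trans (Nat.gcd_dvd_right n' n''))
    rw [decomp x h00 h22, map_add, map_add, map_add, D12 D hD a b hD2 ha hb,
      D22 D hD b hD2 hb, D13 D hD a b c hD2 ha hb hc, D23 D hD b c hD2 hb hc]
    refine ⟨?_, ?_, ?_, ?_, ?_, ?_⟩ <;> rw [sum_coe]
    · simp [Matrix.single, Matrix.add_apply]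
    · simp [Matrix.single, Matrix.add_apply]
    · simp only [Matrix.single, Matrix.add_apply, Matrix.of_apply]
      simp
      exact dvd_add (Dvd.dvd.mul_left h3 a)
        (dvd_deriv b n' h1' hbn' _ h3)
    · simp only [Matrix.single, Matrix.add_apply, Matrix.of_apply]
      simp
      exact hVc _ h4
    · simp only [Matrix.single, Matrix.add_apply, Matrix.of_apply]
      simp
      exact dvd_deriv b n (by omega) hbn _ h5
    · simp only [Matrix.single, Matrix.add_apply, Matrix.of_apply]
      simp
      exact dvd_add (Dvd.dvd.mul_left h6 c)
        (dvd_deriv b n'' h1'' hbn'' _ h6)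


end
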